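/- Let 0 < s ≤ 1 and assume the detailed balance condition π_i a_{ij} = π_j a_{ji} for all i ≠ j. Then for every z ∈ ℝ^n and every u ∈ (0,∞)^n, zᵀ H(u) A(u) z ≥ s Σ_{i=1}^n π_i u_i^{s-2} ( a_{i0} + (s+1) a_{ii} u_i^s ) z_i² + (s²/2) Σ_{i,j=1, i≠j}^n π_i a_{ij} (u_i u_j)^{s-1} ( √(u_j/u_i) z_i + √(u_i/u_j) z_j )². -/

import Mathlib

open Finset Real

noncomputable section

/-- The diffusion matrix `A(u)`: `A_{ij}(u) = δ_{ij}(a_{i0} + Σ_k a_{ik} u_k^s) + s a_{ij} u_i u_j^{s-1}`. -/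
def matA (n : ℕ) (s : ℝ) (a0 : Fin n → ℝ) (a : Fin n → Fin n → ℝ) (u : Fin n → ℝ) :
    Matrix (Fin n) (Fin n) ℝ :=
  Matrix.of fun i j =>
    (if i = j then a0 i + ∑ k, a i k * u k ^ s else 0) + s * a i j * u i * u j ^ (s - 1)

/-- The entropy Hessian `H(u)`: `H_{ij}(u) = δ_{ij} s π_i u_i^{s-2}`. -/
def matH (n : ℕ) (s : ℝ) (P : Fin n → ℝ) (u : Fin n → ℝ) : Matrix (Fin n) (Fin n) ℝ :=
  Matrix.of fun i j => if i = j then s * P i * u i ^ (s - 2) else 0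

/-- The quadratic form `zᵀ M z`. -/
def quad (n : ℕ) (M : Matrix (Fin n) (Fin n) ℝ) (z : Fin n → ℝ) : ℝ :=
  ∑ i, ∑ j, z i * M i j * z j

lemma sum_erase_swap {n : ℕ} (f : Fin n → Fin n → ℝ) :
    ∑ i, ∑ j ∈ Finset.univ.erase i, f j i = ∑ i, ∑ j ∈ Finset.univ.erase i, f i j := by
  simp_rw [← Finset.filter_ne', Finset.sum_filter]
  rw [Finset.sum_comm]
  refine Finset.sum_congr rfl fun i _ => Finset.sum_congr rfl fun j _ => ?_
  simp [ne_comm]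

theorem stmt2 (n : ℕ) (hn : 1 ≤ n) (s : ℝ) (hs : 0 < s) (hs1 : s ≤ 1)
    (a0 : Fin n → ℝ) (a : Fin n → Fin n → ℝ) (P : Fin n → ℝ)
    (ha0 : ∀ i, 0 ≤ a0 i) (ha : ∀ i j, 0 ≤ a i j) (hP : ∀ i, 0 < P i)
    (hdb : ∀ i j, i ≠ j → P i * a i j = P j * a j i)
    (z u : Fin n → ℝ) (hu : ∀ i, 0 < u i) :
    s * ∑ i, P i * u i ^ (s - 2) * (a0 i + (s + 1) * a i i * u i ^ s) * z i ^ 2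
      + s ^ 2 / 2 * ∑ i, ∑ j ∈ Finset.univ.erase i,
          P i * a i j * (u i * u j) ^ (s - 1)
            * (Real.sqrt (u j / u i) * z i + Real.sqrt (u i / u j) * z j) ^ 2
    ≤ quad n (matH n s P u * matA n s a0 a u) z := by
  have hune : ∀ i, u i ≠ 0 := fun i => (hu i).ne'
  -- basic rpow identities
  have h2 : ∀ i : Fin n, u i ^ (s - 2) = u i ^ (s - 1) / u i := by
    intro i
    rw [show s - 2 = s - 1 - 1 by ring, Real.rpow_sub_one (hune i)]
  have h3 : ∀ i : Fin n, u i ^ s = u i ^ (s - 1) * u i := by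
    intro i
    have := Real.rpow_add_one (hune i) (s - 1)
    rw [sub_add_cancel] at this
    exact this
  set F : Fin n → Fin n → ℝ := fun i j =>
    P i * a i j * u i ^ (s - 2) * u j ^ s * z i ^ 2 with hF
  set G : Fin n → Fin n → ℝ := fun i j =>
    P i * a i j * u i ^ (s - 1) * u j ^ (s - 1) * (z i * z j) with hG
  set D := ∑ i, ∑ j ∈ Finset.univ.erase i, F i j with hD
  set E := ∑ i, ∑ j ∈ Finset.univ.erase i, G i j with hE
  -- the product matrix entries
  have hHA : ∀ i j, (matH n s P u * matA n s a0 a u) i j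
      = s * P i * u i ^ (s - 2) * matA n s a0 a u i j := by
    intro i j
    rw [Matrix.mul_apply, Finset.sum_eq_single i]
    · simp [matH]
    · intro b _ hb
      simp [matH, Ne.symm hb]
    · simp
  -- the quadratic form, rewritten
  have hquad : quad n (matH n s P u * matA n s a0 a u) z
      = s * (∑ i, P i * u i ^ (s - 2) * (a0 i + (s + 1) * a i i * u i ^ s) * z i ^ 2)
        + (s * D + s ^ 2 * E) := by
    unfold quad
    simp_rw [hHA]
    have inner : ∀ i : Fin n,
        ∑ j, z i * (s * P i * u i ^ (s - 2) * matA n s a0 a u i j) * z j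
        = s * (P i * u i ^ (s - 2) * (a0 i + (s + 1) * a i i * u i ^ s) * z i ^ 2)
          + (s * ∑ j ∈ Finset.univ.erase i, F i j
             + s ^ 2 * ∑ j ∈ Finset.univ.erase i, G i j) := by
      intro i
      have hx := hune i
      rw [← Finset.add_sum_erase _ _ (Finset.mem_univ i)]
      have hAii : matA n s a0 a u i i
          = a0 i + (a i i * u i ^ s + ∑ k ∈ Finset.univ.erase i, a i k * u k ^ s)
            + s * a i i * u i * u i ^ (s - 1) := by
        show (if (i : Fin n) = i then a0 i + ∑ k, a i k * u k ^ s else 0)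
            + s * a i i * u i * u i ^ (s - 1) = _
        rw [if_pos rfl, ← Finset.add_sum_erase _ (fun k => a i k * u k ^ s) (Finset.mem_univ i)]
      have hoff : ∑ j ∈ Finset.univ.erase i,
            z i * (s * P i * u i ^ (s - 2) * matA n s a0 a u i j) * z j
          = s ^ 2 * ∑ j ∈ Finset.univ.erase i, G i j := by
        rw [Finset.mul_sum]
        refine Finset.sum_congr rfl fun j hj => ?_
        rw [show matA n s a0 a u i j = s * a i j * u i * u j ^ (s - 1) from by
          simp [matA, Ne.symm (Finset.ne_of_mem_erase hj)]]
        simp only [hG]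
        rw [h2 i]
        field_simp
      have key : ∀ S : ℝ, z i * (s * P i * u i ^ (s - 2)
            * (a0 i + (a i i * u i ^ s + S) + s * a i i * u i * u i ^ (s - 1))) * z i
          = s * (P i * u i ^ (s - 2) * (a0 i + (s + 1) * a i i * u i ^ s) * z i ^ 2)
            + (s * P i * u i ^ (s - 2) * z i ^ 2) * S := by
        intro S
        rw [h3 i, h2 i]
        field_simp
        ring
      have hFS : (s * P i * u i ^ (s - 2) * z i ^ 2)
            * (∑ k ∈ Finset.univ.erase i, a i k * u k ^ s)
          = s * ∑ k ∈ Finset.univ.erase i, F i k := by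
        rw [Finset.mul_sum, Finset.mul_sum]
        refine Finset.sum_congr rfl fun k _ => ?_
        simp only [hF]
        ring
      rw [hoff, hAii, key, hFS]
      ring
    rw [Finset.sum_congr rfl fun i _ => inner i]
    rw [Finset.sum_add_distrib, Finset.sum_add_distrib]
    simp_rw [← Finset.mul_sum]
    rfl
  -- expand each square term
  have hsq : ∀ i j : Fin n, j ≠ i →
      P i * a i j * (u i * u j) ^ (s - 1)
        * (Real.sqrt (u j / u i) * z i + Real.sqrt (u i / u j) * z j) ^ 2
      = F i j + F j i + 2 * G i j := by
    intro i j hj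
    have hx := hune i
    have hy := hune j
    have e1 : Real.sqrt (u j / u i) ^ 2 = u j / u i :=
      Real.sq_sqrt (div_nonneg (hu j).le (hu i).le)
    have e2 : Real.sqrt (u i / u j) ^ 2 = u i / u j :=
      Real.sq_sqrt (div_nonneg (hu i).le (hu j).le)
    have e3 : Real.sqrt (u j / u i) * Real.sqrt (u i / u j) = 1 := by
      rw [← Real.sqrt_mul (div_nonneg (hu j).le (hu i).le)]
      rw [show u j / u i * (u i / u j) = 1 from by field_simp]
      exact Real.sqrt_one
    have hexp : (Real.sqrt (u j / u i) * z i + Real.sqrt (u i / u j) * z j) ^ 2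
        = u j / u i * z i ^ 2 + u i / u j * z j ^ 2 + 2 * (z i * z j) := by
      linear_combination z i ^ 2 * e1 + z j ^ 2 * e2 + 2 * z i * z j * e3
    rw [hexp]
    have hmul : (u i * u j) ^ (s - 1) = u i ^ (s - 1) * u j ^ (s - 1) :=
      Real.mul_rpow (hu i).le (hu j).le
    have hdb' : P j * a j i = P i * a i j := (hdb i j (Ne.symm hj)).symm
    simp only [hF, hG]
    rw [hmul, hdb', h2 i, h2 j, h3 i, h3 j]
    field_simp
  have hSQ : ∑ i, ∑ j ∈ Finset.univ.erase i,
      P i * a i j * (u i * u j) ^ (s - 1)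
        * (Real.sqrt (u j / u i) * z i + Real.sqrt (u i / u j) * z j) ^ 2
      = 2 * D + 2 * E := by
    have step1 : ∑ i, ∑ j ∈ Finset.univ.erase i,
        P i * a i j * (u i * u j) ^ (s - 1)
          * (Real.sqrt (u j / u i) * z i + Real.sqrt (u i / u j) * z j) ^ 2
        = ∑ i, ∑ j ∈ Finset.univ.erase i, (F i j + F j i + 2 * G i j) :=
      Finset.sum_congr rfl fun i _ => Finset.sum_congr rfl fun j hj =>
        hsq i j (Finset.ne_of_mem_erase hj)
    rw [step1]
    simp only [Finset.sum_add_distrib]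
    rw [sum_erase_swap F]
    simp_rw [← Finset.mul_sum]
    rw [← hD, ← hE]
    ring
  rw [hquad, hSQ]
  have hD0 : 0 ≤ D := by
    rw [hD]
    refine Finset.sum_nonneg fun i _ => Finset.sum_nonneg fun j _ => ?_
    simp only [hF]
    exact mul_nonneg (mul_nonneg (mul_nonneg (mul_nonneg (hP i).le (ha i j))
      (Real.rpow_nonneg (hu i).le _)) (Real.rpow_nonneg (hu j).le _)) (sq_nonneg _)
  nlinarith [mul_nonneg (mul_nonneg hs.le (sub_nonneg.2 hs1)) hD0]
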